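/- Let φ be an admissible function with lower log-derivative constant γ > 0, and for 1 < q < ∞ define g(r) = −φ(1 + log(r/t))·r^{1/q − 1} for a fixed t > 0. Then there exists λ > 1 depending only on φ and q such that for all r ≥ λt, g'(r) ≥ c·φ(1 + log(r/t))·r^{1/q − 2} for some constant c > 0 depending only on φ and q. -/

import Mathlib

open Real

theorem stmt19 (φ : ℝ → ℝ) (γ β : ℝ) (hγ : 0 < γ) (hβ : 0 < β)
    (hmap : ∀ x : ℝ, 1 ≤ x → 1 ≤ φ x)
    (hφ1 : φ 1 = 1)
    (hconc : ConcaveOn ℝ (Set.Ici (1 : ℝ)) (fun x => Real.log (φ x)))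
    (hder : ∀ x : ℝ, 1 ≤ x → γ / x ≤ deriv φ x / φ x ∧ deriv φ x / φ x ≤ β / x)
    (q : ℝ) (hq : 1 < q) :
    ∃ lam c : ℝ, 1 < lam ∧ 0 < c ∧
      ∀ t : ℝ, 0 < t → ∀ r : ℝ, lam * t ≤ r →
        c * (φ (1 + Real.log (r / t)) * r ^ (1 / q - 2)) ≤
          deriv (fun u => -(φ (1 + Real.log (u / t)) * u ^ (1 / q - 1))) r := by
  have hq0 : 0 < q := by linarith
  set ε : ℝ := 1 - 1 / q with hε
  have hεpos : 0 < ε := by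
    have : 1 / q < 1 := by rw [div_lt_one hq0]; linarith
    simp only [hε]; linarith
  refine ⟨Real.exp (2 * β / ε), ε / 2, ?_, by positivity, ?_⟩
  · have h0 : 0 < 2 * β / ε := by positivity
    calc (1 : ℝ) = Real.exp 0 := by simp
    _ < Real.exp (2 * β / ε) := Real.exp_lt_exp.mpr h0
  intro t ht r hr
  have hr0 : 0 < r := lt_of_lt_of_le (by positivity) hr
  set x := 1 + Real.log (r / t) with hxdef
  have hrt0 : 0 < r / t := by positivity
  have hrt : Real.exp (2 * β / ε) ≤ r / t := (le_div_iff₀ ht).mpr (by linarith)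
  have hlog : 2 * β / ε ≤ Real.log (r / t) := (Real.le_log_iff_exp_le hrt0).mpr hrt
  have hx1 : 1 ≤ x := by
    have : 0 ≤ Real.log (r / t) := le_trans (by positivity) hlog
    simp only [hxdef]; linarith
  have hx0 : 0 < x := by linarith
  have hxbig : 1 + 2 * β / ε ≤ x := by simp only [hxdef]; linarith
  have hφpos : 0 < φ x := lt_of_lt_of_le one_pos (hmap x hx1)
  have hDpos : 0 < deriv φ x := by
    have h := (hder x hx1).1
    have h0 : 0 < γ / x := by positivity
    have h1 : 0 < deriv φ x / φ x := lt_of_lt_of_le h0 h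
    by_contra hc
    push_neg at hc
    have : deriv φ x / φ x ≤ 0 := div_nonpos_of_nonpos_of_nonneg hc hφpos.le
    linarith
  have dφ : DifferentiableAt ℝ φ x := by
    by_contra h
    rw [deriv_zero_of_not_differentiableAt h] at hDpos
    exact lt_irrefl 0 hDpos
  -- derivative computation
  have hdiv : HasDerivAt (fun u : ℝ => u / t) (1 / t) r := by
    simpa using (hasDerivAt_id r).div_const t
  have hlogd : HasDerivAt (fun u : ℝ => Real.log (u / t)) (1 / t / (r / t)) r :=
    hdiv.log (ne_of_gt hrt0)
  have hinner : HasDerivAt (fun u : ℝ => 1 + Real.log (u / t)) (1 / r) r := by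
    have h := hlogd.const_add 1
    rw [div_div_div_cancel_right₀ ht.ne'] at h
    exact h
  have hcomp : HasDerivAt (fun u : ℝ => φ (1 + Real.log (u / t)))
      (deriv φ x * (1 / r)) r := dφ.hasDerivAt.comp r hinner
  have hpow := Real.hasDerivAt_rpow_const (p := 1 / q - 1) (x := r) (Or.inl hr0.ne')
  rw [show (1 / q - 1 - 1 : ℝ) = 1 / q - 2 by ring] at hpow
  have hmul := (hcomp.mul hpow).neg
  rw [show deriv (fun u => -(φ (1 + Real.log (u / t)) * u ^ (1 / q - 1))) r = _ from hmul.deriv]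
  -- the inequality
  set D := deriv φ x with hD
  set P := r ^ (1 / q - 2 : ℝ) with hP
  have hPpos : 0 < P := Real.rpow_pos_of_pos hr0 _
  have hsplit : r ^ (1 / q - 1 : ℝ) = P * r := by
    rw [show (1 / q - 1 : ℝ) = (1 / q - 2) + 1 by ring, Real.rpow_add hr0,
      Real.rpow_one]
  have hβx : β / x ≤ ε / 2 := by
    rw [div_le_iff₀ hx0]
    have hcancel : ε * (2 * β / ε) = 2 * β := by field_simp
    have h2 : 2 * β / ε ≤ x := by linarith
    have h3 : ε * (2 * β / ε) ≤ ε * x := mul_le_mul_of_nonneg_left h2 hεpos.le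
    linarith
  have hDle : D ≤ ε / 2 * φ x := by
    have h1 : D / φ x ≤ β / x := (hder x hx1).2
    have h2 : D ≤ β / x * φ x := (div_le_iff₀ hφpos).mp h1
    have h3 : β / x * φ x ≤ ε / 2 * φ x :=
      mul_le_mul_of_nonneg_right hβx hφpos.le
    linarith
  rw [hsplit]
  have hrr : D * (1 / r) * (P * r) = D * P := by
    field_simp
  rw [hrr]
  have hεq : (1 / q - 1 : ℝ) = -ε := by simp [hε]
  rw [hεq]
  nlinarith [mul_le_mul_of_nonneg_right hDle hPpos.le]
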